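/- arXiv:1004.1369 — 3 statements merged into one kernel-verified Lean document; each statement's English description precedes it below -/
import Mathlib

section
/- In the first Heisenberg group ℍ¹ = ℝ²×ℝ with group law [z,t]·[z',t'] = [z+z', t+t'+2(x₂x₁'−x₁x₂')] and homogeneous norm ‖[z,t]‖∞ = max(‖z‖, |t|^{1/2}), the point x = [0,1] lies on the boundary of the closed unit ball B = {p : ‖p‖∞ ≤ 1}, and for every y ∈ B one has d∞(x,y) ≤ √2 < 2 = diam B, where d∞(x,y) = ‖x⁻¹·y‖∞. -/
noncomputable section

/-- Points of the first Heisenberg group: `((x₁,x₂),t)`. -/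
abbrev Heis := (ℝ × ℝ) × ℝ

/-- Group law `[z,t]·[z',t'] = [z+z', t+t'+2(x₂x₁'−x₁x₂')]`. -/
def Hmul (p q : Heis) : Heis :=
  ((p.1.1 + q.1.1, p.1.2 + q.1.2),
    p.2 + q.2 + 2 * (p.1.2 * q.1.1 - p.1.1 * q.1.2))

/-- Group inverse `[z,t]⁻¹ = [−z,−t]`. -/
def Hinv (p : Heis) : Heis := ((-p.1.1, -p.1.2), -p.2)

/-- Homogeneous norm `‖[z,t]‖∞ = max(‖z‖, |t|^{1/2})`. -/
def Hnorm (p : Heis) : ℝ :=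
  max (Real.sqrt (p.1.1 ^ 2 + p.1.2 ^ 2)) (Real.sqrt |p.2|)

/-- The distance `d∞(p,q) = ‖p⁻¹·q‖∞`. -/
def Hdist (p q : Heis) : ℝ := Hnorm (Hmul (Hinv p) q)

lemma sqrt_le_one_imp {a : ℝ} (ha : 0 ≤ a) (h : Real.sqrt a ≤ 1) : a ≤ 1 := by
  nlinarith [Real.sq_sqrt ha, Real.sqrt_nonneg a]

lemma Hnorm_le_one {p : Heis} (h : Hnorm p ≤ 1) :
    p.1.1 ^ 2 + p.1.2 ^ 2 ≤ 1 ∧ |p.2| ≤ 1 := by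
  have h1 : Real.sqrt (p.1.1 ^ 2 + p.1.2 ^ 2) ≤ 1 := le_trans (le_max_left _ _) h
  have h2 : Real.sqrt |p.2| ≤ 1 := le_trans (le_max_right _ _) h
  exact ⟨sqrt_le_one_imp (by positivity) h1, sqrt_le_one_imp (abs_nonneg _) h2⟩

/-- the point `x = [0,1]` lies on the boundary of the closed unit ball
`B = {p : ‖p‖∞ ≤ 1}`, every `y ∈ B` satisfies `d∞(x,y) ≤ √2 < 2`, and `2` is the
diameter of `B` (the greatest value of `d∞` between points of `B`). -/
theorem heisenberg_ball_not_isodiametric :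
    let B : Set Heis := {p | Hnorm p ≤ 1}
    let x : Heis := ((0, 0), 1)
    x ∈ frontier B ∧
    (∀ y ∈ B, Hdist x y ≤ Real.sqrt 2) ∧
    Real.sqrt 2 < 2 ∧
    IsGreatest {r : ℝ | ∃ p ∈ B, ∃ q ∈ B, Hdist p q = r} 2 := by
  intro B x
  have sqrt2_lt : Real.sqrt 2 < 2 := by
    nlinarith [Real.sq_sqrt (by norm_num : (0:ℝ) ≤ 2), Real.sqrt_nonneg 2]
  have one_le_sqrt2 : (1:ℝ) ≤ Real.sqrt 2 := by
    nlinarith [Real.sq_sqrt (by norm_num : (0:ℝ) ≤ 2), Real.sqrt_nonneg 2]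
  have hxB : x ∈ B := by
    simp only [B, Set.mem_setOf_eq, Hnorm]
    norm_num
  refine ⟨?_, ?_, sqrt2_lt, ?_⟩
  · -- frontier
    rw [frontier, Set.mem_diff]
    refine ⟨subset_closure hxB, ?_⟩
    intro hint
    rw [mem_interior_iff_mem_nhds, Metric.mem_nhds_iff] at hint
    obtain ⟨ε, hε, hball⟩ := hint
    set y : Heis := ((0, 0), 1 + ε / 2) with hy
    have hyb : y ∈ Metric.ball x ε := by
      simp only [Metric.mem_ball, Prod.dist_eq, Real.dist_eq, hy]
      simp
      simp only [x, abs_zero, add_sub_cancel_left, hε, and_self, true_and]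
      rw [abs_of_nonneg (by linarith)]
      linarith
    have hyB : Hnorm y ≤ 1 := hball hyb
    have : Real.sqrt 1 < Real.sqrt |1 + ε / 2| := by
      apply Real.sqrt_lt_sqrt (by norm_num)
      rw [abs_of_nonneg (by linarith)]; linarith
    rw [Real.sqrt_one] at this
    have : Real.sqrt |y.2| ≤ 1 := le_trans (le_max_right _ _) hyB
    simp only [hy] at this
    linarith
  · -- distances from x
    intro y hyB
    obtain ⟨hz, ht⟩ := Hnorm_le_one hyB
    have habs : |y.2 - 1| ≤ 2 := by
      rw [abs_le] at ht ⊢; constructor <;> linarith [ht.1, ht.2]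
    have h1 : Real.sqrt (y.1.1 ^ 2 + y.1.2 ^ 2) ≤ Real.sqrt 2 := by
      apply Real.sqrt_le_sqrt; linarith
    have h2 : Real.sqrt |y.2 - 1| ≤ Real.sqrt 2 := Real.sqrt_le_sqrt habs
    simp only [Hdist, Hmul, Hinv, Hnorm, x]
    apply max_le
    · simpa using h1
    · have e : (-1:ℝ) + y.2 + 2 * (-0 * y.1.1 - -0 * y.1.2) = y.2 - 1 := by ring
      rw [e]; exact h2
  · constructor
    · -- 2 is attained
      refine ⟨((-1, 0), 0), ?_, ((1, 0), 0), ?_, ?_⟩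
      · simp only [B, Set.mem_setOf_eq, Hnorm]; norm_num
      · simp only [B, Set.mem_setOf_eq, Hnorm]; norm_num
      · simp only [Hdist, Hmul, Hinv, Hnorm]
        norm_num
    · -- 2 is an upper bound
      rintro r ⟨p, hp, q, hq, rfl⟩
      obtain ⟨hpz, hpt⟩ := Hnorm_le_one hp
      obtain ⟨hqz, hqt⟩ := Hnorm_le_one hq
      have hcross : (p.1.1 * q.1.2 - p.1.2 * q.1.1) ^ 2 ≤ 1 := by
        nlinarith [sq_nonneg (p.1.1 * q.1.1 + p.1.2 * q.1.2), sq_nonneg (p.1.1*p.1.1 - 1)]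
      have hcross' : |p.1.1 * q.1.2 - p.1.2 * q.1.1| ≤ 1 := by
        rw [abs_le]; constructor <;> nlinarith
      rw [abs_le] at hpt hqt hcross'
      simp only [Hdist, Hmul, Hinv, Hnorm]
      apply max_le
      · have : (-p.1.1 + q.1.1) ^ 2 + (-p.1.2 + q.1.2) ^ 2 ≤ 4 := by nlinarith
        calc Real.sqrt ((-p.1.1 + q.1.1) ^ 2 + (-p.1.2 + q.1.2) ^ 2) ≤ Real.sqrt 4 :=
              Real.sqrt_le_sqrt this
          _ = 2 := by rw [show (4:ℝ) = 2 ^ 2 by norm_num, Real.sqrt_sq (by norm_num)]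
      · have : |(-p.2 + q.2 + 2 * (-p.1.2 * q.1.1 - -p.1.1 * q.1.2))| ≤ 4 := by
          rw [abs_le]; constructor <;> nlinarith [hcross'.1, hcross'.2]
        calc Real.sqrt |(-p.2 + q.2 + 2 * (-p.1.2 * q.1.1 - -p.1.1 * q.1.2))| ≤ Real.sqrt 4 :=
              Real.sqrt_le_sqrt this
          _ = 2 := by rw [show (4:ℝ) = 2 ^ 2 by norm_num, Real.sqrt_sq (by norm_num)]
end
end

section
/- Let (G,d) be a proper metric space (closed bounded sets compact) carrying a transitive family of isometries (left translations) and dilations δ_λ with d(δ_λ x, δ_λ y) = λ d(x,y), and let 𝒮^Q be the Q-dimensional spherical Hausdorff measure. If 𝒮^Q is upper semicontinuous on compact sets with respect to Hausdorff convergence and 0 < 𝒮^Q(B) < ∞ for balls, then there exists a compact set E with diam E = 1 achieving sup{ 𝒮^Q(A) : diam A = 1 }. -/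
noncomputable section

open ENNReal Filter Metric

variable {G : Type*} [MetricSpace G]

/-- `δ`-approximating `Q`-dimensional spherical Hausdorff premeasure. -/
def sphericalPre (Q : ℝ) (δ : ℝ≥0∞) (A : Set G) : ℝ≥0∞ :=
  ⨅ (t : ℕ → Set G) (_ : A ⊆ ⋃ i, t i)
    (_ : ∀ i, (∃ x r, t i = Metric.closedBall x r) ∧ EMetric.diam (t i) ≤ δ),
    ∑' i, EMetric.diam (t i) ^ Q

/-- `Q`-dimensional spherical Hausdorff measure `𝒮^Q`. -/
def sphericalM (Q : ℝ) (A : Set G) : ℝ≥0∞ :=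
  ⨆ (δ : ℝ≥0∞) (_ : 0 < δ), sphericalPre Q δ A

lemma sphericalPre_mono (Q : ℝ) (d : ℝ≥0∞) {A B : Set G} (h : A ⊆ B) :
    sphericalPre Q d A ≤ sphericalPre Q d B :=
  le_iInf fun t => le_iInf fun htB => le_iInf fun hc =>
    iInf_le_of_le t (iInf_le_of_le (h.trans htB) (iInf_le _ hc))

lemma sphericalM_mono (Q : ℝ) {A B : Set G} (h : A ⊆ B) :
    sphericalM Q A ≤ sphericalM Q B :=
  iSup_mono fun d => iSup_mono fun _ => sphericalPre_mono Q d h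

lemma diam_le_of_hausdorffDist_lt {s t : Set G} (hbt : Bornology.IsBounded t)
    (hfin : EMetric.hausdorffEdist s t ≠ ⊤) {r : ℝ}
    (h : Metric.hausdorffDist s t < r) : Metric.diam s ≤ Metric.diam t + 2 * r := by
  have hr : 0 ≤ r := le_of_lt (lt_of_le_of_lt Metric.hausdorffDist_nonneg h)
  apply Metric.diam_le_of_forall_dist_le (add_nonneg Metric.diam_nonneg (by linarith))
  intro x hx y hy
  obtain ⟨x', hx', hxx'⟩ := Metric.exists_dist_lt_of_hausdorffDist_lt hx h hfin
  obtain ⟨y', hy', hyy'⟩ := Metric.exists_dist_lt_of_hausdorffDist_lt hy h hfin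
  have h1 := Metric.dist_le_diam_of_mem hbt hx' hy'
  have h2 : dist x y ≤ dist x x' + dist x' y' + dist y' y := dist_triangle4 x x' y' y
  have h3 : dist y' y = dist y y' := dist_comm _ _
  linarith

lemma nonempty_bounded_of_diam_eq_one {A : Set G} (hA : Metric.diam A = 1) :
    A.Nonempty ∧ Bornology.IsBounded A := by
  constructor
  · by_contra h
    rw [Set.not_nonempty_iff_eq_empty] at h
    rw [h, Metric.diam_empty] at hA
    exact one_ne_zero hA.symm
  · by_contra h
    have hd : EMetric.diam A = ⊤ := by
      rwa [Metric.isBounded_iff_ediam_ne_top, not_not] at h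
    have : Metric.diam A = 0 := Metric.diam_eq_zero_of_unbounded h
    rw [hA] at this
    exact one_ne_zero this

/-- existence of isodiametric sets. In a proper metric space with a
transitive family of isometries preserving `𝒮^Q` and dilations scaling the
distance, if `𝒮^Q` is upper semicontinuous on compact sets under Hausdorff
convergence and is positive and finite on closed balls of positive radius, then
some compact set of diameter `1` achieves `sup{𝒮^Q(A) : diam A = 1}`. -/
theorem isodiametric_sets_exist [ProperSpace G] [Nonempty G] (Q : ℝ) (hQ : 0 < Q)
    (htrans : ∀ x y : G, ∃ f : G → G, Isometry f ∧ f x = y ∧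
      ∀ A : Set G, sphericalM Q (f '' A) = sphericalM Q A)
    (δ : ℝ → G → G)
    (hδ : ∀ l : ℝ, 0 < l → ∀ x y : G, dist (δ l x) (δ l y) = l * dist x y)
    (husc : ∀ (A : ℕ → Set G) (B : Set G), (∀ i, IsCompact (A i)) →
      (∀ i, (A i).Nonempty) → IsCompact B → B.Nonempty →
      Tendsto (fun i => Metric.hausdorffDist (A i) B) atTop (nhds 0) →
      Filter.limsup (fun i => sphericalM Q (A i)) atTop ≤ sphericalM Q B)
    (hball : ∀ (x : G) (r : ℝ), 0 < r →
      0 < sphericalM Q (closedBall x r) ∧ sphericalM Q (closedBall x r) < ⊤) :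
    ∃ E : Set G, IsCompact E ∧ Metric.diam E = 1 ∧
      sphericalM Q E = ⨆ (A : Set G) (_ : Metric.diam A = 1), sphericalM Q A := by
  classical
  obtain ⟨x₀⟩ := ‹Nonempty G›
  set S := ⨆ (A : Set G) (_ : Metric.diam A = 1), sphericalM Q A with hS
  -- there are two distinct points
  obtain ⟨p, q, hpq⟩ : ∃ p q : G, p ≠ q := by
    by_contra h
    push_neg at h
    have h1 := (hball x₀ 1 one_pos).1
    have hzero : sphericalM Q (closedBall x₀ 1) = 0 := by
      have hpre : ∀ d : ℝ≥0∞, sphericalPre Q d (closedBall x₀ 1) ≤ 0 := by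
        intro d
        refine iInf_le_of_le (fun _ => Metric.closedBall x₀ 0) (iInf_le_of_le ?_
          (iInf_le_of_le ?_ ?_))
        · intro z _
          exact Set.mem_iUnion.2 ⟨0, by simp [Metric.closedBall_zero, h z x₀]⟩
        · intro i
          exact ⟨⟨x₀, 0, rfl⟩, by simp [Metric.closedBall_zero, EMetric.diam]⟩
        · simp [Metric.closedBall_zero, EMetric.diam, Metric.ediam_singleton,
            ENNReal.zero_rpow_of_pos hQ]
      refine le_antisymm ?_ zero_le
      exact iSup₂_le fun d _ => hpre d
    rw [hzero] at h1
    exact lt_irrefl 0 h1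
  have hd : 0 < dist p q := dist_pos.2 hpq
  set p1 := δ (1 / dist p q) p
  set q1 := δ (1 / dist p q) q
  have hdist : dist p1 q1 = 1 := by
    rw [hδ _ (by positivity)]
    field_simp
  have hDdiam : Metric.diam ({p1, q1} : Set G) = 1 := by
    rw [Metric.diam_pair]; exact hdist
  have hSle : ∀ A : Set G, Metric.diam A = 1 → sphericalM Q A ≤ S := by
    intro A hA
    rw [hS]
    exact le_iSup₂ (f := fun (A : Set G) (_ : Metric.diam A = 1) => sphericalM Q A) A hA
  -- S is finite
  have hSfin : S < ⊤ := by
    refine lt_of_le_of_lt (le_trans (le_of_eq hS) (iSup₂_le fun A hA => ?_))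
      (hball x₀ 1 one_pos).2
    obtain ⟨⟨a, ha⟩, hAb⟩ := nonempty_bounded_of_diam_eq_one hA
    obtain ⟨f, hf, hfa, hfS⟩ := htrans a x₀
    have himg : f '' A ⊆ closedBall x₀ 1 := by
      rintro _ ⟨y, hy, rfl⟩
      rw [Metric.mem_closedBall, ← hfa, hf.dist_eq]
      have := Metric.dist_le_diam_of_mem hAb hy ha
      rwa [hA] at this
    calc sphericalM Q A = sphericalM Q (f '' A) := (hfS A).symm
      _ ≤ sphericalM Q (closedBall x₀ 1) := sphericalM_mono Q himg
  by_cases hS0 : S = 0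
  · refine ⟨{p1, q1}, (Set.toFinite _).isCompact,
      hDdiam, ?_⟩
    have h1 := hSle _ hDdiam
    rw [hS0] at h1 ⊢
    exact le_antisymm h1 zero_le
  · -- maximizing sequence
    have hseq : ∀ n : ℕ, ∃ A : Set G, Metric.diam A = 1 ∧
        S - ((n : ℝ≥0∞))⁻¹ < sphericalM Q A := by
      intro n
      have hlt : S - ((n : ℝ≥0∞))⁻¹ < S :=
        ENNReal.sub_lt_self hSfin.ne hS0
          (ENNReal.inv_ne_zero.2 (ENNReal.natCast_ne_top n))
      rw [hS] at hlt
      obtain ⟨A, hA⟩ := lt_iSup_iff.mp hlt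
      obtain ⟨hA1, hA2⟩ := lt_iSup_iff.mp hA
      exact ⟨A, hA1, hA2⟩
    choose A hA1 hA2 using hseq
    -- translated compact versions
    have hKex : ∀ n, ∃ K : Set G, IsCompact K ∧ K.Nonempty ∧ Metric.diam K = 1 ∧
        K ⊆ closedBall x₀ 1 ∧ sphericalM Q (A n) ≤ sphericalM Q K := by
      intro n
      obtain ⟨⟨a, ha⟩, hAb⟩ := nonempty_bounded_of_diam_eq_one (hA1 n)
      obtain ⟨f, hf, hfa, hfS⟩ := htrans a x₀
      have hclb : Bornology.IsBounded (closure (A n)) := hAb.closure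
      have hclc : IsCompact (closure (A n)) := hAb.isCompact_closure
      have hcld : Metric.diam (closure (A n)) = 1 := by
        rw [Metric.diam_closure]; exact hA1 n
      refine ⟨f '' closure (A n), hclc.image hf.continuous,
        ⟨f a, Set.mem_image_of_mem f (subset_closure ha)⟩, ?_, ?_, ?_⟩
      · rw [hf.diam_image]; exact hcld
      · rintro _ ⟨y, hy, rfl⟩
        rw [Metric.mem_closedBall, ← hfa, hf.dist_eq]
        have := Metric.dist_le_diam_of_mem hclb hy (subset_closure ha)
        rwa [hcld] at this
      · calc sphericalM Q (A n) ≤ sphericalM Q (closure (A n)) :=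
              sphericalM_mono Q subset_closure
          _ = sphericalM Q (f '' closure (A n)) := (hfS _).symm
    choose K hKc hKne hKd hKsub hKm using hKex
    have hKle : ∀ n : ℕ, sphericalM Q (K n) ≤ S := fun n => hSle _ (hKd n)
    have hKlt : ∀ n : ℕ, S - ((n : ℝ≥0∞))⁻¹ < sphericalM Q (K n) :=
      fun n => lt_of_lt_of_le (hA2 n) (hKm n)
    have htend : Tendsto (fun n => sphericalM Q (K n)) atTop (nhds S) := by
      have hlow : Tendsto (fun n : ℕ => S - ((n : ℝ≥0∞))⁻¹) atTop (nhds S) := by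
        have := ENNReal.Tendsto.sub (tendsto_const_nhds (x := S))
          ENNReal.tendsto_inv_nat_nhds_zero (Or.inl hSfin.ne)
        simpa using this
      exact tendsto_of_tendsto_of_tendsto_of_le_of_le hlow tendsto_const_nhds
        (fun n => (hKlt n).le) hKle
    -- hyperspace argument
    haveI : CompactSpace (closedBall x₀ 1) :=
      isCompact_iff_compactSpace.mp (isCompact_closedBall x₀ 1)
    set s : ℕ → Set (closedBall x₀ 1) := fun n => Subtype.val ⁻¹' K n with hs
    have hsval : ∀ n, Subtype.val '' s n = K n := by
      intro n
      rw [hs]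
      exact Set.image_preimage_eq_of_subset (by rw [Subtype.range_coe]; exact hKsub n)
    have hscomp : ∀ n, IsCompact (s n) :=
      fun n => (IsClosed.preimage continuous_subtype_val (hKc n).isClosed).isCompact
    have hsne : ∀ n, (s n).Nonempty := by
      intro n
      obtain ⟨a, ha⟩ := hKne n
      exact ⟨⟨a, hKsub n ha⟩, ha⟩
    set κ : ℕ → TopologicalSpace.NonemptyCompacts (closedBall x₀ 1) :=
      fun n => ⟨⟨s n, hscomp n⟩, hsne n⟩ with hκ
    obtain ⟨E, φ, hφ, hconv⟩ := CompactSpace.tendsto_subseq κ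
    set B := Subtype.val '' (E : Set (closedBall x₀ 1)) with hB
    have hBc : IsCompact B := E.isCompact.image continuous_subtype_val
    have hBne : B.Nonempty := E.nonempty.image _
    have hdeq : ∀ m, dist (κ m) E = Metric.hausdorffDist (K m) B := by
      intro m
      rw [Metric.NonemptyCompacts.dist_eq,
        ← Metric.hausdorffDist_image isometry_subtype_coe]
      congr 1
      exact hsval m
    have hdconv : Tendsto (fun n => Metric.hausdorffDist (K (φ n)) B) atTop (nhds 0) := by
      have h1 : Tendsto (fun n => dist (κ (φ n)) E) atTop (nhds 0) :=
        tendsto_iff_dist_tendsto_zero.mp hconv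
      simpa [hdeq] using h1
    -- diam B = 1
    have hKb : ∀ n, Bornology.IsBounded (K n) := fun n => (hKc n).isBounded
    have hBb : Bornology.IsBounded B := hBc.isBounded
    have hdiamB : Metric.diam B = 1 := by
      have key : ∀ ε : ℝ, 0 < ε →
          Metric.diam B ≤ 1 + ε ∧ (1 : ℝ) ≤ Metric.diam B + ε := by
        intro ε hε
        obtain ⟨n, hn⟩ : ∃ n, Metric.hausdorffDist (K (φ n)) B < ε / 4 :=
          (hdconv.eventually (gt_mem_nhds (by positivity : (0 : ℝ) < ε / 4))).exists
        have hfin : EMetric.hausdorffEdist (K (φ n)) B ≠ ⊤ :=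
          Metric.hausdorffEdist_ne_top_of_nonempty_of_bounded (hKne _) hBne (hKb _) hBb
        have hfin' : EMetric.hausdorffEdist B (K (φ n)) ≠ ⊤ := by
          simpa only [EMetric.hausdorffEdist, Metric.hausdorffEDist_comm] using hfin
        have hn' : Metric.hausdorffDist B (K (φ n)) < ε / 4 := by
          rwa [Metric.hausdorffDist_comm] at hn
        have h1 := diam_le_of_hausdorffDist_lt (hKb (φ n)) hfin' hn'
        have h2 := diam_le_of_hausdorffDist_lt hBb hfin hn
        rw [hKd (φ n)] at h1 h2
        constructor <;> linarith
      refine le_antisymm ?_ ?_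
      · refine le_of_forall_pos_le_add fun ε hε => (key ε hε).1
      · refine le_of_forall_pos_le_add fun ε hε => ?_
        have := (key ε hε).2
        linarith
    have husc' := husc (fun n => K (φ n)) B (fun n => hKc _) (fun n => hKne _)
      hBc hBne hdconv
    have hlim : limsup (fun n => sphericalM Q (K (φ n))) atTop = S :=
      (htend.comp hφ.tendsto_atTop).limsup_eq
    rw [hlim] at husc'
    exact ⟨B, hBc, hdiamB, le_antisymm (hSle B hdiamB) husc'⟩
end
end

section
/- Let A be a compact subset of the first Heisenberg group (ℝ²×ℝ with group law [z,t]·[z',t'] = [z+z', t+t'+2(x₂x₁'−x₁x₂')]) with diameter 2 for the distance d∞(p,q) = ‖p⁻¹·q‖∞, ‖[z,t]‖∞ = max(‖z‖,|t|^{1/2}). Then the 3-dimensional Lebesgue measure of A satisfies ℒ³(A) ≤ 4π, i.e., ℒ³(A) ≤ 4·ℒ²(U) where U is the closed unit Euclidean disc in ℝ². -/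
noncomputable section

open MeasureTheory

/-- The diameter of a set with respect to `d∞`. -/
def HdiamSet (A : Set Heis) : ℝ := sSup {r : ℝ | ∃ p ∈ A, ∃ q ∈ A, r = Hdist p q}

open Real Set

/-- The distance between two points on the same vertical line. -/
lemma Hdist_vertical (z : ℝ × ℝ) (t t' : ℝ) : Hdist (z, t) (z, t') = Real.sqrt |t' - t| := by
  show max (Real.sqrt ((-z.1 + z.1)^2 + (-z.2 + z.2)^2))
      (Real.sqrt |(-t + t' + 2 * (-z.2 * z.1 - -z.1 * z.2))|) = _
  rw [show (-z.1 + z.1)^2 + (-z.2 + z.2)^2 = 0 by ring,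
    show (-t + t' + 2 * (-z.2 * z.1 - -z.1 * z.2)) = t' - t by ring, Real.sqrt_zero]
  exact max_eq_right (Real.sqrt_nonneg _)

/-- The horizontal component of the distance. -/
lemma Hdist_fst_le (p q : Heis) :
    Real.sqrt ((q.1.1 - p.1.1)^2 + (q.1.2 - p.1.2)^2) ≤ Hdist p q := by
  have he : (-p.1.1 + q.1.1)^2 + (-p.1.2 + q.1.2)^2
      = (q.1.1 - p.1.1)^2 + (q.1.2 - p.1.2)^2 := by ring
  show _ ≤ max (Real.sqrt ((-p.1.1 + q.1.1)^2 + (-p.1.2 + q.1.2)^2)) (Real.sqrt _)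
  rw [he]
  exact le_max_left _ _

/-- Planar isodiametric inequality, centered version: a compact set in the closed upper
half-plane containing the origin (which is a lowest point), with pairwise squared Euclidean
distances at most `4`, has area at most `π`. -/
lemma centered_isodiametric (K : Set (ℝ × ℝ)) (hK : IsCompact K)
    (h0 : ((0:ℝ),(0:ℝ)) ∈ K) (hup : ∀ x ∈ K, 0 ≤ x.2)
    (hd : ∀ a ∈ K, ∀ b ∈ K, (a.1-b.1)^2+(a.2-b.2)^2 ≤ 4) :
    volume K ≤ ENNReal.ofReal π := by
  have hKm : MeasurableSet K := hK.isClosed.measurableSet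
  have hnorm : ∀ x ∈ K, x.1^2 + x.2^2 ≤ 4 := by
    intro x hx
    have := hd x hx _ h0
    simpa using this
  -- the radial sets and the radius function
  set M : ℝ → Set ℝ := fun θ => {ρ : ℝ | 0 ≤ ρ ∧ (ρ * Real.cos θ, ρ * Real.sin θ) ∈ K}
    with hM
  set r : ℝ → ℝ := fun θ => sSup (M θ) with hrdef
  have hM0 : ∀ θ, (0:ℝ) ∈ M θ := by
    intro θ
    exact ⟨le_rfl, by simpa using h0⟩
  have hMsub : ∀ θ, M θ ⊆ Icc 0 2 := by
    intro θ ρ hρ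
    rcases hρ with ⟨h1, h2⟩
    have h3 := hnorm _ h2
    have hsc := Real.sin_sq_add_cos_sq θ
    simp only at h3
    have h4 : ρ^2 ≤ 4 := by
      have he : (ρ * Real.cos θ)^2 + (ρ * Real.sin θ)^2 = ρ^2 * (Real.sin θ^2 + Real.cos θ^2) := by
        ring
      rw [he, hsc, mul_one] at h3
      exact h3
    exact ⟨h1, by nlinarith⟩
  have hMc : ∀ θ, IsCompact (M θ) := by
    intro θ
    apply IsCompact.of_isClosed_subset isCompact_Icc ?_ (hMsub θ)
    have : M θ = Ici 0 ∩ (fun ρ : ℝ => (ρ * Real.cos θ, ρ * Real.sin θ)) ⁻¹' K := by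
      ext ρ; simp [hM]
    rw [this]
    exact isClosed_Ici.inter (hK.isClosed.preimage (by fun_prop))
  have hr_mem : ∀ θ, r θ ∈ M θ := fun θ => (hMc θ).sSup_mem ⟨0, hM0 θ⟩
  have hr_nonneg : ∀ θ, 0 ≤ r θ := fun θ => (hr_mem θ).1
  have hr_le : ∀ θ ρ, ρ ∈ M θ → ρ ≤ r θ := fun θ ρ h => le_csSup (hMc θ).bddAbove h
  -- the pairing inequality
  have hpair : ∀ θ, r θ ^ 2 + r (θ + π/2) ^ 2 ≤ 4 := by
    intro θ
    have hP := (hr_mem θ).2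
    have hQ := (hr_mem (θ + π/2)).2
    have h := hd _ hP _ hQ
    rw [Real.cos_add_pi_div_two, Real.sin_add_pi_div_two] at h
    have hsc := Real.sin_sq_add_cos_sq θ
    nlinarith [h, hsc]
  -- the polar-coordinates integrand
  set f : ℝ × ℝ → ℝ := K.indicator 1 with hfdef
  set μ : Measure ℝ := volume.restrict (Ioi (0:ℝ)) with hμdef
  set ν : Measure ℝ := volume.restrict (Ioo (-π) π) with hνdef
  set g : ℝ × ℝ → ℝ := fun p => p.1 • f (p.1 * Real.cos p.2, p.1 * Real.sin p.2) with hgdef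
  have hpi := Real.pi_pos
  have hgsymm : ∀ p : ℝ × ℝ, p.1 • f (polarCoord.symm p) = g p := by
    intro p
    rw [polarCoord_symm_apply]
  have hkey : (volume K).toReal = ∫ p in polarCoord.target, p.1 • f (polarCoord.symm p) := by
    rw [integral_comp_polarCoord_symm f, hfdef, integral_indicator_one hKm]
    rfl
  have hgmeas : Measurable g := by
    apply Measurable.smul measurable_fst
    have hfm : Measurable f := measurable_one.indicator hKm
    exact hfm.comp (by fun_prop)
  have hgbound : ∀ p : ℝ × ℝ,
      ‖g p‖ ≤ ‖(Icc (-2:ℝ) 2 ×ˢ (univ : Set ℝ)).indicator (fun _ => (2:ℝ)) p‖ := by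
    intro p
    by_cases hp : (p.1 * Real.cos p.2, p.1 * Real.sin p.2) ∈ K
    · have h4 := hnorm _ hp
      simp only at h4
      have hsc := Real.sin_sq_add_cos_sq p.2
      have hp1 : p.1^2 ≤ 4 := by
        have he : (p.1 * Real.cos p.2)^2 + (p.1 * Real.sin p.2)^2
            = p.1^2 * (Real.sin p.2^2 + Real.cos p.2^2) := by ring
        rw [he, hsc, mul_one] at h4
        exact h4
      have hmem : p ∈ Icc (-2:ℝ) 2 ×ˢ (univ : Set ℝ) :=
        ⟨⟨by nlinarith, by nlinarith⟩, trivial⟩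
      rw [indicator_of_mem hmem]
      have hv : g p = p.1 := by simp [hgdef, hfdef, indicator_of_mem hp]
      rw [hv]
      simp only [Real.norm_eq_abs]
      rw [abs_of_nonneg (by norm_num : (0:ℝ) ≤ 2)]
      exact abs_le.mpr ⟨by nlinarith, by nlinarith⟩
    · have hv : g p = 0 := by simp [hgdef, hfdef, indicator_of_notMem hp]
      rw [hv]
      simp only [norm_zero]
      exact norm_nonneg _
  have hbint : Integrable
      ((Icc (-2:ℝ) 2 ×ˢ (univ : Set ℝ)).indicator (fun _ => (2:ℝ))) (μ.prod ν) := by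
    rw [integrable_indicator_iff (measurableSet_Icc.prod MeasurableSet.univ)]
    refine integrableOn_const (ne_of_lt ?_)
    rw [Measure.prod_prod]
    apply ENNReal.mul_lt_top
    · exact (Measure.restrict_apply_le _ _).trans_lt
        (by rw [Real.volume_Icc]; exact ENNReal.ofReal_lt_top)
    · rw [Measure.restrict_apply_univ, Real.volume_Ioo]
      exact ENNReal.ofReal_lt_top
  have hgint : Integrable g (μ.prod ν) :=
    Integrable.mono hbint hgmeas.aestronglyMeasurable (Filter.Eventually.of_forall hgbound)
  have htarget : ∫ p in polarCoord.target, p.1 • f (polarCoord.symm p)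
      = ∫ θ, (∫ ρ, g (ρ, θ) ∂μ) ∂ν := by
    have h1 : (volume : Measure (ℝ×ℝ)).restrict polarCoord.target = μ.prod ν := by
      rw [hμdef, hνdef, Measure.prod_restrict, ← Measure.volume_eq_prod, polarCoord_target]
    calc ∫ p in polarCoord.target, p.1 • f (polarCoord.symm p)
        = ∫ p in polarCoord.target, g p :=
          integral_congr_ae (Filter.Eventually.of_forall fun p => hgsymm p)
      _ = ∫ p, g p ∂(μ.prod ν) := by rw [← h1]
      _ = ∫ θ, (∫ ρ, g (ρ, θ) ∂μ) ∂ν := integral_prod_symm g hgint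
  set F : ℝ → ℝ := fun θ => ∫ ρ, g (ρ, θ) ∂μ with hFdef
  have hF_int : Integrable F ν := hgint.integral_prod_right
  have hθint : ∀ θ : ℝ, Integrable (fun ρ => g (ρ, θ)) μ := by
    intro θ
    have hb : Integrable ((Icc (-2:ℝ) 2).indicator (fun _ => (2:ℝ))) μ := by
      rw [integrable_indicator_iff measurableSet_Icc]
      refine integrableOn_const (ne_of_lt ?_)
      exact (Measure.restrict_apply_le _ _).trans_lt
        (by rw [Real.volume_Icc]; exact ENNReal.ofReal_lt_top)
    apply hb.mono (hgmeas.comp (measurable_id.prodMk measurable_const)).aestronglyMeasurable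
    filter_upwards with ρ
    have heq : ((Icc (-2:ℝ) 2 ×ˢ (univ : Set ℝ)).indicator (fun _ => (2:ℝ))) (ρ, θ)
        = (Icc (-2:ℝ) 2).indicator (fun _ => (2:ℝ)) ρ := by
      by_cases h : ρ ∈ Icc (-2:ℝ) 2 <;> simp [indicator, h]
    rw [← heq]
    exact hgbound (ρ, θ)
  have hFle : ∀ θ, F θ ≤ r θ ^ 2 / 2 := by
    intro θ
    have hind_int : Integrable ((Ioc (0:ℝ) (r θ)).indicator id) μ := by
      rw [integrable_indicator_iff measurableSet_Ioc, hμdef, IntegrableOn,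
        Measure.restrict_restrict measurableSet_Ioc,
        inter_eq_self_of_subset_left Ioc_subset_Ioi_self]
      exact intervalIntegral.intervalIntegrable_id.1
    have hmono : ∀ ρ ∈ Ioi (0:ℝ), g (ρ, θ) ≤ (Ioc (0:ℝ) (r θ)).indicator id ρ := by
      intro ρ hρ
      by_cases hp : (ρ * Real.cos θ, ρ * Real.sin θ) ∈ K
      · have hρr : ρ ≤ r θ := hr_le θ ρ ⟨le_of_lt hρ, hp⟩
        have hval : g (ρ, θ) = ρ := by simp [hgdef, hfdef, indicator_of_mem hp]
        have hmm : ρ ∈ Ioc (0:ℝ) (r θ) := ⟨hρ, hρr⟩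
        rw [hval, indicator_of_mem hmm]
        exact le_rfl
      · have hval : g (ρ, θ) = 0 := by simp [hgdef, hfdef, indicator_of_notMem hp]
        rw [hval]
        exact indicator_nonneg (fun y hy => le_of_lt hy.1) ρ
    calc F θ ≤ ∫ ρ, (Ioc (0:ℝ) (r θ)).indicator id ρ ∂μ := by
          apply integral_mono_ae (hθint θ) hind_int
          rw [hμdef]
          exact (ae_restrict_iff' measurableSet_Ioi).2 (Filter.Eventually.of_forall hmono)
      _ = ∫ ρ in Ioc (0:ℝ) (r θ), ρ := by
          rw [hμdef, integral_indicator measurableSet_Ioc,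
            Measure.restrict_restrict measurableSet_Ioc,
            inter_eq_self_of_subset_left Ioc_subset_Ioi_self]
          rfl
      _ = r θ ^ 2 / 2 := by
          rw [← intervalIntegral.integral_of_le (hr_nonneg θ), integral_id]
          ring
  have hFnonneg : ∀ θ, 0 ≤ F θ := by
    intro θ
    apply integral_nonneg_of_ae
    rw [hμdef]
    refine (ae_restrict_iff' measurableSet_Ioi).2 (Filter.Eventually.of_forall ?_)
    intro ρ hρ
    show (0:ℝ) ≤ g (ρ, θ)
    by_cases hp : (ρ * Real.cos θ, ρ * Real.sin θ) ∈ K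
    · have hval : g (ρ, θ) = ρ := by simp [hgdef, hfdef, indicator_of_mem hp]
      rw [hval]
      exact le_of_lt hρ
    · have hval : g (ρ, θ) = 0 := by simp [hgdef, hfdef, indicator_of_notMem hp]
      rw [hval]
  have hFzero : ∀ θ ∈ Ioo (-π) (0:ℝ), F θ = 0 := by
    intro θ hθ
    apply integral_eq_zero_of_ae
    rw [hμdef]
    refine (ae_restrict_iff' measurableSet_Ioi).2 (Filter.Eventually.of_forall ?_)
    intro ρ hρ
    have hsin : Real.sin θ < 0 := Real.sin_neg_of_neg_of_neg_pi_lt hθ.2 hθ.1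
    have hp : (ρ * Real.cos θ, ρ * Real.sin θ) ∉ K := by
      intro hmem
      have h5 := hup _ hmem
      simp only at h5
      nlinarith [mem_Ioi.mp hρ]
    show g (ρ, θ) = 0
    simp [hgdef, hfdef, indicator_of_notMem hp]
  -- interval integrability on subintervals of [-π, π]
  have hFI : IntervalIntegrable F volume (-π) π := by
    constructor
    · exact (integrableOn_Ioc_iff_integrableOn_Ioo).2 hF_int
    · rw [Ioc_eq_empty (by linarith)]
      exact integrableOn_empty
  have hsub : ∀ c d : ℝ, -π ≤ c → c ≤ π → -π ≤ d → d ≤ π →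
      IntervalIntegrable F volume c d := by
    intro c d hc1 hc2 hd1 hd2
    apply hFI.mono_set
    exact Set.uIcc_subset_uIcc (Set.mem_uIcc.2 (Or.inl ⟨hc1, hc2⟩))
      (Set.mem_uIcc.2 (Or.inl ⟨hd1, hd2⟩))
  have hI2 : ∫ θ, F θ ∂ν = ∫ θ in (-π)..π, F θ := by
    rw [intervalIntegral.integral_of_le (by linarith : (-π:ℝ) ≤ π),
      integral_Ioc_eq_integral_Ioo, hνdef]
  have hzero : ∫ θ in (-π)..(0:ℝ), F θ = 0 := by
    rw [intervalIntegral.integral_of_le (by linarith : (-π:ℝ) ≤ 0),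
      integral_Ioc_eq_integral_Ioo]
    calc ∫ θ in Ioo (-π) (0:ℝ), F θ = ∫ θ in Ioo (-π) (0:ℝ), (0:ℝ) :=
          setIntegral_congr_fun measurableSet_Ioo hFzero
      _ = 0 := by simp
  have hshift : ∫ θ in (π/2)..π, F θ = ∫ θ in (0:ℝ)..(π/2), F (θ + π/2) := by
    have h6 : (∫ θ in (0:ℝ)..(π/2), F (θ + π/2)) = ∫ θ in (0+π/2)..(π/2+π/2), F θ :=
      intervalIntegral.integral_comp_add_right F (π/2)
    rw [zero_add, add_halves] at h6
    exact h6.symm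
  have hcompint : IntervalIntegrable (fun θ => F (θ + π/2)) volume 0 (π/2) := by
    have h7 := (hsub (π/2) π (by linarith) (by linarith) (by linarith)
      (by linarith)).comp_add_right (π/2)
    simpa [sub_half] using h7
  have hbound : ∫ θ in (0:ℝ)..(π/2), (F θ + F (θ + π/2)) ≤ ∫ θ in (0:ℝ)..(π/2), (2:ℝ) := by
    apply intervalIntegral.integral_mono_on (by linarith)
      ((hsub 0 (π/2) (by linarith) (by linarith) (by linarith) (by linarith)).add hcompint)
      intervalIntegrable_const
    intro θ _
    have h8 := hFle θ
    have h9 := hFle (θ + π/2)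
    have h10 := hpair θ
    linarith
  have hIle : (volume K).toReal ≤ π := by
    rw [hkey, htarget]
    have e0 : ∫ θ, (∫ ρ, g (ρ, θ) ∂μ) ∂ν = ∫ θ, F θ ∂ν := rfl
    rw [e0, hI2,
      ← intervalIntegral.integral_add_adjacent_intervals
        (hsub (-π) 0 (by linarith) (by linarith) (by linarith) (by linarith))
        (hsub 0 π (by linarith) (by linarith) (by linarith) (by linarith)),
      hzero, zero_add,
      ← intervalIntegral.integral_add_adjacent_intervals
        (hsub 0 (π/2) (by linarith) (by linarith) (by linarith) (by linarith))
        (hsub (π/2) π (by linarith) (by linarith) (by linarith) (by linarith)),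
      hshift,
      ← intervalIntegral.integral_add
        (hsub 0 (π/2) (by linarith) (by linarith) (by linarith) (by linarith)) hcompint]
    calc ∫ θ in (0:ℝ)..(π/2), (F θ + F (θ + π/2)) ≤ ∫ θ in (0:ℝ)..(π/2), (2:ℝ) := hbound
      _ = π := by
          rw [intervalIntegral.integral_const]
          simp [smul_eq_mul]
  calc volume K = ENNReal.ofReal ((volume K).toReal) :=
        (ENNReal.ofReal_toReal hK.measure_lt_top.ne).symm
    _ ≤ ENNReal.ofReal π := ENNReal.ofReal_le_ofReal hIle

/-- Planar isodiametric inequality: a compact planar set with pairwise squared Euclidean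
distances at most `4` has area at most `π`. -/
lemma planar_isodiametric (S : Set (ℝ × ℝ)) (hS : IsCompact S)
    (hd : ∀ a ∈ S, ∀ b ∈ S, (a.1-b.1)^2+(a.2-b.2)^2 ≤ 4) :
    volume S ≤ ENNReal.ofReal π := by
  rcases S.eq_empty_or_nonempty with rfl | hne
  · simp
  obtain ⟨z₀, hz₀, hmin⟩ := hS.exists_isMinOn hne continuous_snd.continuousOn
  have himg : volume ((· + z₀) ⁻¹' S) = volume S := measure_preimage_add_right volume z₀ S
  set K := (· + z₀) ⁻¹' S with hKdef
  have hKimg : K = (fun x => x - z₀) '' S := by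
    ext x
    constructor
    · intro hx
      exact ⟨x + z₀, hx, by simp⟩
    · rintro ⟨s, hs, rfl⟩
      simpa [hKdef] using hs
  have hKcomp : IsCompact K := by
    rw [hKimg]; exact hS.image (continuous_id.sub continuous_const)
  have h0 : ((0:ℝ),(0:ℝ)) ∈ K := by
    have : ((0:ℝ),(0:ℝ)) + z₀ = z₀ := by ext <;> simp
    simpa [hKdef, this] using hz₀
  have hup : ∀ x ∈ K, 0 ≤ x.2 := by
    intro x hx
    have h1 : z₀.2 ≤ (x + z₀).2 := hmin hx
    have : (x + z₀).2 = x.2 + z₀.2 := rfl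
    linarith [h1.trans_eq this]
  have hdK : ∀ a ∈ K, ∀ b ∈ K, (a.1-b.1)^2+(a.2-b.2)^2 ≤ 4 := by
    intro a ha b hb
    have := hd _ ha _ hb
    have e1 : (a + z₀).1 = a.1 + z₀.1 := rfl
    have e2 : (a + z₀).2 = a.2 + z₀.2 := rfl
    have e3 : (b + z₀).1 = b.1 + z₀.1 := rfl
    have e4 : (b + z₀).2 = b.2 + z₀.2 := rfl
    rw [e1, e2, e3, e4] at this
    nlinarith [this]
  calc volume S = volume K := himg.symm
    _ ≤ ENNReal.ofReal π := centered_isodiametric K hKcomp h0 hup hdK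

/-- a compact subset of the first Heisenberg group whose `d∞`-diameter
is `2` has Lebesgue measure at most `4π = 4·ℒ²(unit disc)`. -/
theorem heisenberg_isodiametric_upper_bound (A : Set Heis)
    (hA : IsCompact A) (hdiam : HdiamSet A = 2) :
    volume A ≤ ENNReal.ofReal (4 * Real.pi) := by
  rcases A.eq_empty_or_nonempty with rfl | hAne
  · simp
  have hpi := Real.pi_pos
  -- every pairwise distance is at most 2
  have hcont : Continuous (fun pq : Heis × Heis => Hdist pq.1 pq.2) := by
    unfold Hdist Hnorm Hmul Hinv
    fun_prop
  have hset : {r : ℝ | ∃ p ∈ A, ∃ q ∈ A, r = Hdist p q}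
      = (fun pq : Heis × Heis => Hdist pq.1 pq.2) '' (A ×ˢ A) := by
    ext x
    constructor
    · rintro ⟨p, hp, q, hq, rfl⟩
      exact ⟨(p, q), ⟨hp, hq⟩, rfl⟩
    · rintro ⟨⟨p, q⟩, ⟨hp, hq⟩, rfl⟩
      exact ⟨p, hp, q, hq, rfl⟩
  have hbdd : BddAbove {r : ℝ | ∃ p ∈ A, ∃ q ∈ A, r = Hdist p q} := by
    rw [hset]
    exact ((hA.prod hA).image hcont).bddAbove
  have hdist_le : ∀ p ∈ A, ∀ q ∈ A, Hdist p q ≤ 2 := by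
    intro p hp q hq
    have hmem : Hdist p q ∈ {r : ℝ | ∃ p ∈ A, ∃ q ∈ A, r = Hdist p q} := ⟨p, hp, q, hq, rfl⟩
    calc Hdist p q ≤ HdiamSet A := le_csSup hbdd hmem
      _ = 2 := hdiam
  -- the projection and its diameter bound
  set S : Set (ℝ × ℝ) := Prod.fst '' A with hSdef
  have hS : IsCompact S := hA.image continuous_fst
  have hSd : ∀ a ∈ S, ∀ b ∈ S, (a.1 - b.1)^2 + (a.2 - b.2)^2 ≤ 4 := by
    rintro a ⟨p, hp, rfl⟩ b ⟨q, hq, rfl⟩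
    have h := hdist_le q hq p hp
    have h1 : Real.sqrt ((p.1.1 - q.1.1)^2 + (p.1.2 - q.1.2)^2) ≤ 2 :=
      le_trans (Hdist_fst_le q p) h
    have hE : (0:ℝ) ≤ (p.1.1 - q.1.1)^2 + (p.1.2 - q.1.2)^2 := by positivity
    nlinarith [Real.sq_sqrt hE, Real.sqrt_nonneg ((p.1.1 - q.1.1)^2 + (p.1.2 - q.1.2)^2)]
  -- the fiber bound
  have hfiber : ∀ z : ℝ × ℝ, ∀ t t' : ℝ, (z, t) ∈ A → (z, t') ∈ A → |t' - t| ≤ 4 := by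
    intro z t t' h1 h2
    have h := hdist_le (z, t) h1 (z, t') h2
    rw [Hdist_vertical] at h
    nlinarith [Real.sq_sqrt (abs_nonneg (t' - t)), Real.sqrt_nonneg |t' - t|]
  -- Fubini
  have hAm : MeasurableSet A := hA.isClosed.measurableSet
  have hvol : volume A = ∫⁻ z, volume (Prod.mk z ⁻¹' A) := by
    rw [Measure.volume_eq_prod, Measure.prod_apply hAm]
  have hfib : ∀ z : ℝ × ℝ, volume (Prod.mk z ⁻¹' A) ≤ S.indicator (fun _ => (4 : ENNReal)) z := by
    intro z
    by_cases hz : z ∈ S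
    · rw [indicator_of_mem hz]
      obtain ⟨p, hp, hpz⟩ := hz
      set T : Set ℝ := Prod.mk z ⁻¹' A with hTdef
      have hT0 : p.2 ∈ T := by
        have : (z, p.2) = p := by rw [← hpz]
        simpa [hTdef, this] using hp
      have hTpair : ∀ t ∈ T, ∀ t' ∈ T, |t' - t| ≤ 4 := by
        intro t ht t' ht'
        exact hfiber z t t' ht ht'
      have hTbdd : BddBelow T := by
        refine ⟨p.2 - 4, fun t ht => ?_⟩
        have := abs_le.mp (hTpair p.2 hT0 t ht)
        linarith [this.1]
      have hsubT : T ⊆ Icc (sInf T) (sInf T + 4) := by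
        intro t ht
        refine ⟨csInf_le hTbdd ht, ?_⟩
        have h9 : t - 4 ≤ sInf T := by
          apply le_csInf ⟨p.2, hT0⟩
          intro t' ht'
          have := abs_le.mp (hTpair t' ht' t ht)
          linarith [this.2]
        linarith
      calc volume T ≤ volume (Icc (sInf T) (sInf T + 4)) := measure_mono hsubT
        _ = ENNReal.ofReal 4 := by rw [Real.volume_Icc]; norm_num
        _ = 4 := by norm_num
    · rw [indicator_of_notMem hz]
      have hTe : Prod.mk z ⁻¹' A = ∅ := by
        rw [eq_empty_iff_forall_notMem]
        intro t ht
        exact hz ⟨(z, t), ht, rfl⟩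
      rw [hTe]
      simp
  calc volume A = ∫⁻ z, volume (Prod.mk z ⁻¹' A) := hvol
    _ ≤ ∫⁻ z, S.indicator (fun _ => (4 : ENNReal)) z := lintegral_mono hfib
    _ = 4 * volume S := by
        rw [lintegral_indicator hS.isClosed.measurableSet]
        simp [Measure.restrict_apply MeasurableSet.univ]
    _ ≤ 4 * ENNReal.ofReal Real.pi :=
        mul_le_mul_right (planar_isodiametric S hS hSd) 4
    _ = ENNReal.ofReal (4 * Real.pi) := by
        rw [ENNReal.ofReal_mul (by norm_num : (0:ℝ) ≤ 4)]
        norm_num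
end
end
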